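/- Let X be a second countable Baire complex topological vector space and Γ a set of continuous linear operators on X. Suppose Γ satisfies the diskcyclicity criterion: there exist dense subsets X₀ and Y₀ of X, a sequence (α_k) in 𝔻 \ {0}, a sequence (T_k) of operators in Γ, and a sequence of maps S_k : Y₀ → X such that (i) α_k T_k x → 0 for all x ∈ X₀; (ii) α_k⁻¹ S_k y → 0 for all y ∈ Y₀; (iii) T_k S_k y → y for all y ∈ Y₀. Then the set 𝔻C(Γ) of diskcyclic vectors for Γ is dense in X; in particular, Γ is diskcyclic. -/

import Mathlib

/-- If a set `Γ` of operators on a second countable Baire complex topological vector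
space satisfies the diskcyclicity criterion, then the set of diskcyclic vectors of `Γ`
is dense; in particular `Γ` is diskcyclic. -/
theorem stmt_11 {X : Type*} [AddCommGroup X] [Module ℂ X] [TopologicalSpace X]
    [IsTopologicalAddGroup X] [ContinuousSMul ℂ X] [SecondCountableTopology X]
    [BaireSpace X] (Γ : Set (X →L[ℂ] X))
    (X₀ Y₀ : Set X) (hX₀ : Dense X₀) (hY₀ : Dense Y₀)
    (α : ℕ → ℂ) (hα : ∀ k, α k ≠ 0 ∧ ‖α k‖ ≤ 1)
    (T : ℕ → X →L[ℂ] X) (hT : ∀ k, T k ∈ Γ)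
    (S : ℕ → X → X)
    (h1 : ∀ x ∈ X₀, Filter.Tendsto (fun k => α k • T k x) Filter.atTop (nhds 0))
    (h2 : ∀ y ∈ Y₀, Filter.Tendsto (fun k => (α k)⁻¹ • S k y) Filter.atTop (nhds 0))
    (h3 : ∀ y ∈ Y₀, Filter.Tendsto (fun k => T k (S k y)) Filter.atTop (nhds y)) :
    Dense {x : X | Dense {y : X | ∃ a : ℂ, ‖a‖ ≤ 1 ∧ ∃ A ∈ Γ, y = a • A x}} ∧
    ∃ x : X, Dense {y : X | ∃ a : ℂ, ‖a‖ ≤ 1 ∧ ∃ A ∈ Γ, y = a • A x} := by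
  obtain ⟨B, hBc, hBne, hBbasis⟩ := TopologicalSpace.exists_countable_basis X
  -- For each basic open set V, the set of points whose disk orbit meets V
  set G : Set X → Set X := fun V => {x | ∃ k : ℕ, α k • T k x ∈ V} with hG
  have hGopen : ∀ V ∈ B, IsOpen (G V) := by
    intro V hV
    have hVopen : IsOpen V := hBbasis.isOpen hV
    have : G V = ⋃ k : ℕ, (fun x => α k • T k x) ⁻¹' V := by
      ext x; simp [hG]
    rw [this]
    exact isOpen_iUnion fun k =>
      hVopen.preimage (((T k).continuous).const_smul (α k))
  have hGdense : ∀ V ∈ B, V.Nonempty → Dense (G V) := by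
    intro V hV hVne
    rw [dense_iff_inter_open]
    intro U hUopen hUne
    have hVopen : IsOpen V := hBbasis.isOpen hV
    obtain ⟨x₀, hx₀X₀, hx₀U⟩ := hX₀.exists_mem_open hUopen hUne
    obtain ⟨y₀, hy₀Y₀, hy₀V⟩ := hY₀.exists_mem_open hVopen hVne
    -- z k = x₀ + (α k)⁻¹ • S k y₀
    have hz : Filter.Tendsto (fun k => x₀ + (α k)⁻¹ • S k y₀) Filter.atTop (nhds x₀) := by
      have h := (tendsto_const_nhds (x := x₀) (f := Filter.atTop (α := ℕ))).add (h2 y₀ hy₀Y₀)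
      simpa using h
    have horb : Filter.Tendsto (fun k => α k • T k (x₀ + (α k)⁻¹ • S k y₀))
        Filter.atTop (nhds y₀) := by
      have h := (h1 x₀ hx₀X₀).add (h3 y₀ hy₀Y₀)
      rw [zero_add] at h
      refine h.congr fun k => ?_
      have hk := (hα k).1
      rw [map_add, smul_add, map_smul, smul_smul, mul_inv_cancel₀ hk, one_smul]
    have hU : ∀ᶠ k in Filter.atTop, x₀ + (α k)⁻¹ • S k y₀ ∈ U :=
      hz (hUopen.mem_nhds hx₀U)
    have hVev : ∀ᶠ k in Filter.atTop, α k • T k (x₀ + (α k)⁻¹ • S k y₀) ∈ V :=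
      horb (hVopen.mem_nhds hy₀V)
    obtain ⟨k, hkU, hkV⟩ := (hU.and hVev).exists
    exact ⟨x₀ + (α k)⁻¹ • S k y₀, hkU, k, hkV⟩
  -- Baire category
  have hcount : Countable ↥B := hBc.to_subtype
  have hD : Dense (⋂ V : B, G V) := by
    refine dense_iInter_of_isOpen (fun V => hGopen V V.2) (fun V => ?_)
    rcases Set.eq_empty_or_nonempty (V : Set X) with h | h
    · exact absurd (h ▸ V.2) hBne
    · exact hGdense V V.2 h
  have hsub : (⋂ V : B, G V) ⊆
      {x : X | Dense {y : X | ∃ a : ℂ, ‖a‖ ≤ 1 ∧ ∃ A ∈ Γ, y = a • A x}} := by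
    intro x hx
    rw [Set.mem_setOf_eq, hBbasis.dense_iff]
    intro o ho hone
    have hxo : x ∈ G o := Set.mem_iInter.mp hx ⟨o, ho⟩
    obtain ⟨k, hk⟩ := hxo
    exact ⟨α k • T k x, hk, α k, (hα k).2, T k, hT k, rfl⟩
  have hDense := hD.mono hsub
  exact ⟨hDense, hDense.nonempty⟩
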